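/- Assume the refactorization identity B̲₂(z)·B̲₁(z) = B₁(z)·B₂(z) holds for all z ∉ {z₁, z₂}, and that the scalars q̲₂†·A⁻¹·p₁, q₂†·A⁻²·p₁ and q₂†·A⁻¹·p̲₁ are nonzero. Then the common product L(z) is given explicitly in terms of the data (p̲₁, q̲₂†) and (p₁, q₂†) by the parameterization formula L(z) = [A + (z−z₁)⁻¹ • ((z₁−ζ₂)·(q̲₂†·A⁻¹·p₁)⁻¹ • (p₁·q̲₂†) + (ζ₂−ζ₁)·(q₂†·A⁻²·p₁)⁻¹ • (p₁·(q₂†·A⁻¹)))] · [A + (z−z₂)⁻¹ • ((z₂−ζ₁)·(q₂†·A⁻¹·p̲₁)⁻¹ • (p̲₁·q₂†) + (ζ₁−ζ₂)·(q₂†·A⁻²·p₁)⁻¹ • ((A⁻¹·p₁)·q₂†))] for all z ∉ {z₁, z₂}. -/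

import Mathlib

open Matrix

private lemma mul_oneByOne {r : ℕ} (p : Matrix (Fin r) (Fin 1) ℂ)
    (M : Matrix (Fin 1) (Fin 1) ℂ) : p * M = (M 0 0) • p := by
  ext i j
  fin_cases j
  simp [Matrix.mul_apply]
  ring

private lemma oneByOne_mul {r : ℕ} (M : Matrix (Fin 1) (Fin 1) ℂ)
    (q : Matrix (Fin 1) (Fin r) ℂ) : M * q = (M 0 0) • q := by
  ext i j
  fin_cases i
  simp [Matrix.mul_apply]

private lemma trace_pqB {r : ℕ} (p : Matrix (Fin r) (Fin 1) ℂ)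
    (q : Matrix (Fin 1) (Fin r) ℂ) (B : Matrix (Fin r) (Fin r) ℂ) :
    (p * q * B).trace = (q * B * p) 0 0 := by
  rw [Matrix.mul_assoc, Matrix.trace_mul_comm, Matrix.trace_fin_one]

/-- Explicit parameterization of the common product
`L(z) = B̲₂(z)B̲₁(z) = B₁(z)B₂(z)` in terms of `(p̲₁, q̲₂†)` and `(p₁, q₂†)`. -/
theorem isospectral_parameterization
    (r : ℕ) (hr : 1 ≤ r)
    (A : Matrix (Fin r) (Fin r) ℂ) (hA : IsUnit A.det)
    (z₁ z₂ ζ₁ ζ₂ : ℂ)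
    (h12 : z₁ ≠ z₂) (h1a : z₁ ≠ ζ₁) (h1b : z₁ ≠ ζ₂)
    (h2a : z₂ ≠ ζ₁) (h2b : z₂ ≠ ζ₂) (hab : ζ₁ ≠ ζ₂)
    (pu₁ pu₂ p₁ p₂ : Matrix (Fin r) (Fin 1) ℂ)
    (qu₁ qu₂ q₁ q₂ : Matrix (Fin 1) (Fin r) ℂ)
    (hpu₁ : pu₁ ≠ 0) (hpu₂ : pu₂ ≠ 0) (hp₁ : p₁ ≠ 0) (hp₂ : p₂ ≠ 0)
    (hqu₁ : qu₁ ≠ 0) (hqu₂ : qu₂ ≠ 0) (hq₁ : q₁ ≠ 0) (hq₂ : q₂ ≠ 0)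
    (hζu₁ : (pu₁ * qu₁ * A⁻¹).trace = z₁ - ζ₁)
    (hζ₁ : (p₁ * q₁ * A⁻¹).trace = z₁ - ζ₁)
    (hζu₂ : (pu₂ * qu₂ * A⁻¹).trace = z₂ - ζ₂)
    (hζ₂ : (p₂ * q₂ * A⁻¹).trace = z₂ - ζ₂)
    (hre : ∀ z : ℂ, z ≠ z₁ → z ≠ z₂ →
      (A + (z - z₂)⁻¹ • (pu₂ * qu₂)) * (A + (z - z₁)⁻¹ • (pu₁ * qu₁)) =
      (A + (z - z₁)⁻¹ • (p₁ * q₁)) * (A + (z - z₂)⁻¹ • (p₂ * q₂)))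
    (hs₁ : (qu₂ * A⁻¹ * p₁) 0 0 ≠ 0)
    (hs₂ : (q₂ * (A ^ 2)⁻¹ * p₁) 0 0 ≠ 0)
    (hs₃ : (q₂ * A⁻¹ * pu₁) 0 0 ≠ 0) :
    ∀ z : ℂ, z ≠ z₁ → z ≠ z₂ →
      (A + (z - z₁)⁻¹ • (p₁ * q₁)) * (A + (z - z₂)⁻¹ • (p₂ * q₂)) =
      (A + (z - z₁)⁻¹ •
        (((z₁ - ζ₂) * ((qu₂ * A⁻¹ * p₁) 0 0)⁻¹) • (p₁ * qu₂)
          + ((ζ₂ - ζ₁) * ((q₂ * (A ^ 2)⁻¹ * p₁) 0 0)⁻¹) • (p₁ * (q₂ * A⁻¹)))) *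
      (A + (z - z₂)⁻¹ •
        (((z₂ - ζ₁) * ((q₂ * A⁻¹ * pu₁) 0 0)⁻¹) • (pu₁ * q₂)
          + ((ζ₁ - ζ₂) * ((q₂ * (A ^ 2)⁻¹ * p₁) 0 0)⁻¹) • ((A⁻¹ * p₁) * q₂))) := by
  have hAl : A⁻¹ * A = 1 := Matrix.nonsing_inv_mul A hA
  have hAr : A * A⁻¹ = 1 := Matrix.mul_nonsing_inv A hA
  have hA2 : (A ^ 2)⁻¹ = A⁻¹ * A⁻¹ := by rw [sq, Matrix.mul_inv_rev]
  set s₁ : ℂ := (qu₂ * A⁻¹ * p₁) 0 0 with hs1def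
  set s₂ : ℂ := (q₂ * (A ^ 2)⁻¹ * p₁) 0 0 with hs2def
  set s₃ : ℂ := (q₂ * A⁻¹ * pu₁) 0 0 with hs3def
  -- scalar traces
  have tr_q1 : (q₁ * A⁻¹ * p₁) 0 0 = z₁ - ζ₁ := by rw [← trace_pqB]; exact hζ₁
  have tr_qu1 : (qu₁ * A⁻¹ * pu₁) 0 0 = z₁ - ζ₁ := by rw [← trace_pqB]; exact hζu₁
  have tr_qu2 : (qu₂ * A⁻¹ * pu₂) 0 0 = z₂ - ζ₂ := by rw [← trace_pqB]; exact hζu₂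
  have tr_q2 : (q₂ * A⁻¹ * p₂) 0 0 = z₂ - ζ₂ := by rw [← trace_pqB]; exact hζ₂
  have hζ2z2 : ζ₂ - z₂ ≠ 0 := sub_ne_zero.mpr (Ne.symm h2b)
  have hζ2z1 : ζ₂ - z₁ ≠ 0 := sub_ne_zero.mpr (Ne.symm h1b)
  have hζ1z1 : ζ₁ - z₁ ≠ 0 := sub_ne_zero.mpr (Ne.symm h1a)
  have hζ1z2 : ζ₁ - z₂ ≠ 0 := sub_ne_zero.mpr (Ne.symm h2a)
  have h62 : q₂ * A⁻¹ * (A⁻¹ * p₁) = q₂ * (A ^ 2)⁻¹ * p₁ := by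
    rw [hA2]; simp only [Matrix.mul_assoc]
  ------------------------------------------------------------------
  -- PART 1 : q₁ in terms of qu₂ and q₂ * A⁻¹
  ------------------------------------------------------------------
  have stepA : qu₂ * A⁻¹ * (A + (ζ₂ - z₂)⁻¹ • (pu₂ * qu₂)) = 0 := by
    rw [Matrix.mul_add, Matrix.mul_assoc qu₂ A⁻¹ A, hAl, Matrix.mul_one, Matrix.mul_smul,
      ← Matrix.mul_assoc (qu₂ * A⁻¹) pu₂ qu₂, oneByOne_mul, tr_qu2, smul_smul]
    have hsc : (ζ₂ - z₂)⁻¹ * (z₂ - ζ₂) = -1 := by field_simp; ring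
    rw [hsc, neg_one_smul]
    abel
  have hre2 := hre ζ₂ (Ne.symm h1b) (Ne.symm h2b)
  have hw0 : (qu₂ * A⁻¹ * (A + (ζ₂ - z₁)⁻¹ • (p₁ * q₁))) * (A + (ζ₂ - z₂)⁻¹ • (p₂ * q₂)) = 0 := by
    calc (qu₂ * A⁻¹ * (A + (ζ₂ - z₁)⁻¹ • (p₁ * q₁))) * (A + (ζ₂ - z₂)⁻¹ • (p₂ * q₂))
        = qu₂ * A⁻¹ * ((A + (ζ₂ - z₁)⁻¹ • (p₁ * q₁)) * (A + (ζ₂ - z₂)⁻¹ • (p₂ * q₂))) := by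
          simp only [Matrix.mul_assoc]
      _ = qu₂ * A⁻¹ * ((A + (ζ₂ - z₂)⁻¹ • (pu₂ * qu₂)) * (A + (ζ₂ - z₁)⁻¹ • (pu₁ * qu₁))) := by
          rw [hre2]
      _ = (qu₂ * A⁻¹ * (A + (ζ₂ - z₂)⁻¹ • (pu₂ * qu₂))) * (A + (ζ₂ - z₁)⁻¹ • (pu₁ * qu₁)) := by
          simp only [Matrix.mul_assoc]
      _ = 0 := by rw [stepA, Matrix.zero_mul]
  set w := qu₂ * A⁻¹ * (A + (ζ₂ - z₁)⁻¹ • (p₁ * q₁)) with hw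
  have hwA : w * A = (-(ζ₂ - z₂)⁻¹ * (w * p₂) 0 0) • q₂ := by
    have h1 : w * A + ((ζ₂ - z₂)⁻¹ * (w * p₂) 0 0) • q₂ = 0 := by
      calc w * A + ((ζ₂ - z₂)⁻¹ * (w * p₂) 0 0) • q₂
          = w * A + (ζ₂ - z₂)⁻¹ • (w * p₂ * q₂) := by rw [oneByOne_mul, smul_smul]
        _ = w * (A + (ζ₂ - z₂)⁻¹ • (p₂ * q₂)) := by
            rw [Matrix.mul_add, Matrix.mul_smul, ← Matrix.mul_assoc w p₂ q₂]
        _ = 0 := hw0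
    have h2 := eq_neg_of_add_eq_zero_left h1
    rw [h2, ← neg_smul]
    module
  set c : ℂ := -(ζ₂ - z₂)⁻¹ * (w * p₂) 0 0 with hc
  have hweq : w = c • (q₂ * A⁻¹) := by
    have h1 : w * (A * A⁻¹) = (c • q₂) * A⁻¹ := by rw [← Matrix.mul_assoc, hwA]
    rw [hAr, Matrix.mul_one] at h1
    rw [h1, Matrix.smul_mul]
  -- determine c
  have hBp : (A + (ζ₂ - z₁)⁻¹ • (p₁ * q₁)) * (A⁻¹ * p₁)
      = (1 + (ζ₂ - z₁)⁻¹ * (z₁ - ζ₁)) • p₁ := by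
    have e1 : A * (A⁻¹ * p₁) = p₁ := by rw [← Matrix.mul_assoc, hAr, Matrix.one_mul]
    have e2 : (p₁ * q₁) * (A⁻¹ * p₁) = (z₁ - ζ₁) • p₁ := by
      rw [Matrix.mul_assoc p₁ q₁ (A⁻¹ * p₁), ← Matrix.mul_assoc q₁ A⁻¹ p₁,
        mul_oneByOne, tr_q1]
    rw [Matrix.add_mul, Matrix.smul_mul, e1, e2]
    module
  have hcs : c * s₂ = (1 + (ζ₂ - z₁)⁻¹ * (z₁ - ζ₁)) * s₁ := by
    have h3 : w * (A⁻¹ * p₁) = c • (q₂ * A⁻¹ * (A⁻¹ * p₁)) := by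
      rw [hweq, Matrix.smul_mul, Matrix.mul_assoc]
    have h4 : w * (A⁻¹ * p₁) = (1 + (ζ₂ - z₁)⁻¹ * (z₁ - ζ₁)) • (qu₂ * A⁻¹ * p₁) := by
      rw [hw, Matrix.mul_assoc (qu₂ * A⁻¹), hBp, Matrix.mul_smul]
    have h7 : c • (q₂ * (A ^ 2)⁻¹ * p₁) = (1 + (ζ₂ - z₁)⁻¹ * (z₁ - ζ₁)) • (qu₂ * A⁻¹ * p₁) := by
      rw [← h62, ← h3, h4]
    have h8 := congrArg (fun M : Matrix (Fin 1) (Fin 1) ℂ => M 0 0) h7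
    simpa [smul_eq_mul] using h8
  have hwexp : w = qu₂ + ((ζ₂ - z₁)⁻¹ * s₁) • q₁ := by
    rw [hw, Matrix.mul_add, Matrix.mul_assoc qu₂ A⁻¹ A, hAl, Matrix.mul_one, Matrix.mul_smul,
      ← Matrix.mul_assoc (qu₂ * A⁻¹) p₁ q₁, oneByOne_mul, smul_smul]
  have hq1eq : q₁ = ((z₁ - ζ₂) * s₁⁻¹) • qu₂ + ((ζ₂ - ζ₁) * s₂⁻¹) • (q₂ * A⁻¹) := by
    have key : ((ζ₂ - z₁)⁻¹ * s₁) • q₁ = c • (q₂ * A⁻¹) - qu₂ := by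
      rw [← hweq, hwexp]; abel
    have hk : ((ζ₂ - z₁) * s₁⁻¹) * ((ζ₂ - z₁)⁻¹ * s₁) = 1 := by field_simp
    have key2 : q₁ = ((ζ₂ - z₁) * s₁⁻¹) • (c • (q₂ * A⁻¹) - qu₂) := by
      rw [← key, smul_smul, hk, one_smul]
    have e1 : (ζ₂ - z₁) * s₁⁻¹ * c = (ζ₂ - ζ₁) * s₂⁻¹ := by
      field_simp at hcs ⊢
      linear_combination hcs
    rw [key2, smul_sub, smul_smul, e1]
    module
  ------------------------------------------------------------------
  -- PART 2 : p₂ in terms of pu₁ and A⁻¹ * p₁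
  ------------------------------------------------------------------
  have stepA' : (A + (ζ₁ - z₁)⁻¹ • (pu₁ * qu₁)) * (A⁻¹ * pu₁) = 0 := by
    have e1 : A * (A⁻¹ * pu₁) = pu₁ := by rw [← Matrix.mul_assoc, hAr, Matrix.one_mul]
    have e2 : (pu₁ * qu₁) * (A⁻¹ * pu₁) = (z₁ - ζ₁) • pu₁ := by
      rw [Matrix.mul_assoc pu₁ qu₁ (A⁻¹ * pu₁), ← Matrix.mul_assoc qu₁ A⁻¹ pu₁,
        mul_oneByOne, tr_qu1]
    rw [Matrix.add_mul, Matrix.smul_mul, e1, e2, smul_smul]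
    have hsc : (ζ₁ - z₁)⁻¹ * (z₁ - ζ₁) = -1 := by field_simp; ring
    rw [hsc, neg_one_smul]
    abel
  have hre1 := hre ζ₁ (Ne.symm h1a) (Ne.symm h2a)
  have hv0 : (A + (ζ₁ - z₁)⁻¹ • (p₁ * q₁)) * ((A + (ζ₁ - z₂)⁻¹ • (p₂ * q₂)) * (A⁻¹ * pu₁)) = 0 := by
    calc (A + (ζ₁ - z₁)⁻¹ • (p₁ * q₁)) * ((A + (ζ₁ - z₂)⁻¹ • (p₂ * q₂)) * (A⁻¹ * pu₁))
        = ((A + (ζ₁ - z₁)⁻¹ • (p₁ * q₁)) * (A + (ζ₁ - z₂)⁻¹ • (p₂ * q₂))) * (A⁻¹ * pu₁) := by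
          simp only [Matrix.mul_assoc]
      _ = ((A + (ζ₁ - z₂)⁻¹ • (pu₂ * qu₂)) * (A + (ζ₁ - z₁)⁻¹ • (pu₁ * qu₁))) * (A⁻¹ * pu₁) := by
          rw [hre1]
      _ = (A + (ζ₁ - z₂)⁻¹ • (pu₂ * qu₂)) * ((A + (ζ₁ - z₁)⁻¹ • (pu₁ * qu₁)) * (A⁻¹ * pu₁)) := by
          simp only [Matrix.mul_assoc]
      _ = 0 := by rw [stepA', Matrix.mul_zero]
  set v := (A + (ζ₁ - z₂)⁻¹ • (p₂ * q₂)) * (A⁻¹ * pu₁) with hv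
  have hvA : A * v = (-(ζ₁ - z₁)⁻¹ * (q₁ * v) 0 0) • p₁ := by
    have h1 : A * v + ((ζ₁ - z₁)⁻¹ * (q₁ * v) 0 0) • p₁ = 0 := by
      calc A * v + ((ζ₁ - z₁)⁻¹ * (q₁ * v) 0 0) • p₁
          = A * v + (ζ₁ - z₁)⁻¹ • (p₁ * (q₁ * v)) := by rw [mul_oneByOne, smul_smul]
        _ = (A + (ζ₁ - z₁)⁻¹ • (p₁ * q₁)) * v := by
            rw [Matrix.add_mul, Matrix.smul_mul, Matrix.mul_assoc p₁ q₁ v]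
        _ = 0 := hv0
    have h2 := eq_neg_of_add_eq_zero_left h1
    rw [h2, ← neg_smul]
    module
  set d : ℂ := -(ζ₁ - z₁)⁻¹ * (q₁ * v) 0 0 with hd
  have hveq : v = d • (A⁻¹ * p₁) := by
    have h1 : (A⁻¹ * A) * v = A⁻¹ * (d • p₁) := by rw [Matrix.mul_assoc, hvA, Matrix.mul_smul]
    rw [hAl, Matrix.one_mul] at h1
    rw [h1, Matrix.mul_smul]
  have hqB : (q₂ * A⁻¹) * (A + (ζ₁ - z₂)⁻¹ • (p₂ * q₂))
      = (1 + (ζ₁ - z₂)⁻¹ * (z₂ - ζ₂)) • q₂ := by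
    rw [Matrix.mul_add, Matrix.mul_assoc q₂ A⁻¹ A, hAl, Matrix.mul_one, Matrix.mul_smul,
      ← Matrix.mul_assoc (q₂ * A⁻¹) p₂ q₂, oneByOne_mul, tr_q2]
    module
  have hds : d * s₂ = (1 + (ζ₁ - z₂)⁻¹ * (z₂ - ζ₂)) * s₃ := by
    have h3 : (q₂ * A⁻¹) * v = d • (q₂ * A⁻¹ * (A⁻¹ * p₁)) := by
      rw [hveq, Matrix.mul_smul]
    have h4 : (q₂ * A⁻¹) * v = (1 + (ζ₁ - z₂)⁻¹ * (z₂ - ζ₂)) • (q₂ * A⁻¹ * pu₁) := by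
      rw [hv, ← Matrix.mul_assoc, hqB, Matrix.smul_mul]
      simp only [Matrix.mul_assoc]
    have h7 : d • (q₂ * (A ^ 2)⁻¹ * p₁) = (1 + (ζ₁ - z₂)⁻¹ * (z₂ - ζ₂)) • (q₂ * A⁻¹ * pu₁) := by
      rw [← h62, ← h3, h4]
    have h8 := congrArg (fun M : Matrix (Fin 1) (Fin 1) ℂ => M 0 0) h7
    simpa [smul_eq_mul] using h8
  have hvexp : v = pu₁ + ((ζ₁ - z₂)⁻¹ * s₃) • p₂ := by
    have e1 : A * (A⁻¹ * pu₁) = pu₁ := by rw [← Matrix.mul_assoc, hAr, Matrix.one_mul]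
    have e2 : (p₂ * q₂) * (A⁻¹ * pu₁) = s₃ • p₂ := by
      rw [Matrix.mul_assoc p₂ q₂ (A⁻¹ * pu₁), ← Matrix.mul_assoc q₂ A⁻¹ pu₁, mul_oneByOne]
    rw [hv, Matrix.add_mul, Matrix.smul_mul, e1, e2, smul_smul]
  have hp2eq : p₂ = ((z₂ - ζ₁) * s₃⁻¹) • pu₁ + ((ζ₁ - ζ₂) * s₂⁻¹) • (A⁻¹ * p₁) := by
    have key : ((ζ₁ - z₂)⁻¹ * s₃) • p₂ = d • (A⁻¹ * p₁) - pu₁ := by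
      rw [← hveq, hvexp]; abel
    have hk : ((ζ₁ - z₂) * s₃⁻¹) * ((ζ₁ - z₂)⁻¹ * s₃) = 1 := by field_simp
    have key2 : p₂ = ((ζ₁ - z₂) * s₃⁻¹) • (d • (A⁻¹ * p₁) - pu₁) := by
      rw [← key, smul_smul, hk, one_smul]
    have e1 : (ζ₁ - z₂) * s₃⁻¹ * d = (ζ₁ - ζ₂) * s₂⁻¹ := by
      field_simp at hds ⊢
      linear_combination hds
    rw [key2, smul_sub, smul_smul, e1]
    module
  ------------------------------------------------------------------
  -- conclude
  ------------------------------------------------------------------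
  have hG1 : p₁ * q₁ = ((z₁ - ζ₂) * s₁⁻¹) • (p₁ * qu₂) + ((ζ₂ - ζ₁) * s₂⁻¹) • (p₁ * (q₂ * A⁻¹)) := by
    rw [hq1eq, Matrix.mul_add, Matrix.mul_smul, Matrix.mul_smul]
  have hG2 : p₂ * q₂ = ((z₂ - ζ₁) * s₃⁻¹) • (pu₁ * q₂) + ((ζ₁ - ζ₂) * s₂⁻¹) • ((A⁻¹ * p₁) * q₂) := by
    rw [hp2eq, Matrix.add_mul, Matrix.smul_mul, Matrix.smul_mul]
  intro z hz1 hz2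
  rw [hG1, hG2]
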